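/- Let (a_m(x), b_m(x)) be the symmetric decomposition of Q_m(x). Then for all m ≥ 0: (x−1) b_{m+1}(x) = (4mx + x − 1) a_m(x) − 4x(1+x) a_m'(x) + (6mx − 4m + x − 3)(x+1) b_m(x) − 2x(1+x)^2 b_m'(x). -/

import Mathlib

open Polynomial

private lemma reflect_sub' (f g : Polynomial ℝ) (N : ℕ) :
    reflect N (f - g) = reflect N f - reflect N g := by
  ext i
  simp [coeff_reflect]

private lemma reflect_succ_eq (q : Polynomial ℝ) (n : ℕ) (h : q.natDegree ≤ n) :
    reflect (n + 1) q = X * reflect n q := by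
  ext i
  rcases i with _ | i
  · simp only [coeff_reflect, revAt_zero, mul_coeff_zero, coeff_X_zero, zero_mul]
    exact coeff_eq_zero_of_natDegree_lt (by omega)
  · rw [coeff_X_mul]
    simp only [coeff_reflect]
    by_cases hi : i ≤ n
    · rw [revAt_le hi, revAt_le (by omega : i + 1 ≤ n + 1)]
      congr 1
      omega
    · rw [revAt_eq_self_of_lt (by omega), revAt_eq_self_of_lt (by omega)]
      rw [coeff_eq_zero_of_natDegree_lt (by omega), coeff_eq_zero_of_natDegree_lt (by omega)]

private lemma reflect_derivative' (p : Polynomial ℝ) (m : ℕ) (h : p.natDegree ≤ m) :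
    reflect m (derivative p) =
      C (m : ℝ) * (reflect m p * X ^ 1) - derivative (reflect m p) * X ^ 2 := by
  ext i
  rw [coeff_sub, coeff_C_mul, coeff_mul_X_pow', coeff_mul_X_pow', coeff_reflect]
  rcases i with _ | _ | i
  · simp only [if_neg (by omega : ¬ 1 ≤ 0), if_neg (by omega : ¬ 2 ≤ 0)]
    rw [revAt_zero, coeff_derivative,
      coeff_eq_zero_of_natDegree_lt (by omega : p.natDegree < m + 1)]
    ring
  · simp only [if_pos (le_refl 1), if_neg (by omega : ¬ 2 ≤ 1)]
    norm_num
    rcases m with _ | k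
    · rw [revAt_eq_self_of_lt (by omega), coeff_derivative,
        coeff_eq_zero_of_natDegree_lt (by omega : p.natDegree < 1 + 1)]
      push_cast; ring
    · rw [revAt_le (by omega : 1 ≤ k + 1), coeff_derivative, show k + 1 - 1 = k from rfl]
      push_cast; ring
  · simp only [if_pos (by omega : 1 ≤ i + 2), if_pos (by omega : 2 ≤ i + 2)]
    rw [show i + 2 - 1 = i + 1 from rfl, show i + 2 - 2 = i from rfl,
      coeff_derivative, coeff_derivative, coeff_reflect]
    rcases lt_trichotomy (i + 1) m with hm | hm | hm
    · obtain ⟨k, rfl⟩ : ∃ k, m = i + 2 + k := ⟨m - i - 2, by omega⟩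
      rw [revAt_le (by omega : i + 1 + 1 ≤ i + 2 + k), revAt_le (by omega : i + 1 ≤ i + 2 + k),
        show i + 2 + k - (i + 1 + 1) = k from by omega,
        show i + 2 + k - (i + 1) = k + 1 from by omega]
      push_cast; ring
    · subst hm
      rw [revAt_eq_self_of_lt (by omega), revAt_le (le_refl (i + 1)), Nat.sub_self,
        coeff_eq_zero_of_natDegree_lt (by omega : p.natDegree < i + 1 + 1 + 1)]
      push_cast; ring
    · rw [revAt_eq_self_of_lt (by omega), revAt_eq_self_of_lt (by omega),
        coeff_eq_zero_of_natDegree_lt (by omega : p.natDegree < i + 1 + 1 + 1),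
        coeff_eq_zero_of_natDegree_lt (by omega : p.natDegree < i + 1)]
      ring

private lemma natDegree_X_mul_derivative_le (p : Polynomial ℝ) :
    (X * derivative p : Polynomial ℝ).natDegree ≤ p.natDegree := by
  by_cases hp : derivative p = 0
  · simp [hp]
  · have h1 : 1 ≤ p.natDegree := by
      by_contra hc
      push_neg at hc
      have h0 : p.natDegree = 0 := by omega
      obtain ⟨c, rfl⟩ := (Polynomial.natDegree_eq_zero).mp h0
      simp at hp
    calc (X * derivative p : Polynomial ℝ).natDegree
        ≤ (X : Polynomial ℝ).natDegree + (derivative p).natDegree := natDegree_mul_le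
      _ ≤ 1 + (p.natDegree - 1) := by
          rw [natDegree_X]
          exact add_le_add_right (natDegree_derivative_le p) 1
      _ ≤ p.natDegree := by omega

theorem b_recurrence (Q a b : ℕ → Polynomial ℝ) (h0 : Q 0 = 1)
    (hrec : ∀ m : ℕ, Q (m + 1) =
      (2 * (m : Polynomial ℝ) + 1) * (2 + 3 * Polynomial.X) * Q m
        - 2 * Polynomial.X * (1 + Polynomial.X) * Polynomial.derivative (Q m))
    (ha : ∀ m : ℕ, (1 - Polynomial.X) * a m = Q m - Polynomial.X * Polynomial.reflect m (Q m))
    (hb : ∀ m : ℕ, (Polynomial.X - 1) * b m = Q m - Polynomial.reflect m (Q m)) :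
    ∀ m : ℕ, (Polynomial.X - 1) * b (m + 1) =
      (4 * (m : Polynomial ℝ) * Polynomial.X + Polynomial.X - 1) * a m
        - 4 * Polynomial.X * (1 + Polynomial.X) * Polynomial.derivative (a m)
        + (6 * (m : Polynomial ℝ) * Polynomial.X - 4 * (m : Polynomial ℝ) + Polynomial.X - 3) *
            (Polynomial.X + 1) * b m
        - 2 * Polynomial.X * (1 + Polynomial.X) ^ 2 * Polynomial.derivative (b m) := by
  have hX1 : (X - 1 : Polynomial ℝ) ≠ 0 := by
    intro hc
    have := congrArg (Polynomial.eval 2) hc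
    simp at this
    norm_num at this
  have hdeg : ∀ m : ℕ, (Q m).natDegree ≤ m := by
    intro m
    induction m with
    | zero => simp [h0]
    | succ n ih =>
      rw [hrec n]
      refine le_trans (natDegree_sub_le _ _) (max_le ?_ ?_)
      · refine le_trans natDegree_mul_le ?_
        have hc : ((2 * (n : Polynomial ℝ) + 1) * (2 + 3 * X)).natDegree ≤ 1 := by
          compute_degree
        omega
      · have hre : (2 * X * (1 + X) * derivative (Q n) : Polynomial ℝ)
            = (2 * (1 + X)) * (X * derivative (Q n)) := by ring
        rw [hre]
        refine le_trans natDegree_mul_le ?_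
        have hc : ((2 : Polynomial ℝ) * (1 + X)).natDegree ≤ 1 := by compute_degree
        have := (natDegree_X_mul_derivative_le (Q n)).trans ih
        omega
  intro m
  -- basic decomposition
  have hab : a m + b m = reflect m (Q m) := by
    refine mul_left_cancel₀ hX1 ?_
    linear_combination hb m - ha m
  have hQab : Q m = a m + X * b m := by
    have h2 := hb m
    rw [← hab] at h2
    linear_combination -h2
  have hdR : derivative (reflect m (Q m)) = derivative (a m) + derivative (b m) := by
    rw [← hab, derivative_add]
  have hdQ : derivative (Q m) = derivative (a m) + b m + X * derivative (b m) := by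
    rw [hQab]
    simp only [derivative_add, derivative_mul, derivative_X, one_mul]
    ring
  -- reflect of the first summand
  have hrefl1 : reflect (m + 1) ((2 * (m : Polynomial ℝ) + 1) * (2 + 3 * X) * Q m)
      = (2 * (m : Polynomial ℝ) + 1) * (3 + 2 * X) * reflect m (Q m) := by
    have hf : ((2 * (m : Polynomial ℝ) + 1) * (2 + 3 * X)).natDegree ≤ 1 := by
      compute_degree
    rw [show m + 1 = 1 + m from by omega, reflect_mul _ _ hf (hdeg m)]
    congr 1
    have he : (2 * (m : Polynomial ℝ) + 1) * (2 + 3 * X)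
        = C (2 * (m : ℝ) + 1) * (C 3 * X ^ 1 + C 2 * X ^ 0) := by
      simp only [map_add, map_mul, map_one, map_ofNat, C_eq_natCast]
      ring
    rw [he, reflect_C_mul, reflect_add, reflect_C_mul_X_pow, reflect_C_mul_X_pow,
      revAt_le (le_refl 1), revAt_le (by omega : 0 ≤ 1)]
    simp only [map_add, map_mul, map_one, map_ofNat, C_eq_natCast]
    push_cast
    ring
  -- reflect of the second summand
  have hrefl2 : reflect (m + 1) (2 * X * (1 + X) * derivative (Q m))
      = 2 * (1 + X) * ((m : Polynomial ℝ) * reflect m (Q m) - X * derivative (reflect m (Q m))) := by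
    refine mul_left_cancel₀ (X_ne_zero : (X : Polynomial ℝ) ≠ 0) ?_
    have hdegG : (2 * X * (1 + X) * derivative (Q m) : Polynomial ℝ).natDegree ≤ m + 1 := by
      have hre : (2 * X * (1 + X) * derivative (Q m) : Polynomial ℝ)
          = (2 * (1 + X)) * (X * derivative (Q m)) := by ring
      rw [hre]
      refine le_trans natDegree_mul_le ?_
      have hc : ((2 : Polynomial ℝ) * (1 + X)).natDegree ≤ 1 := by compute_degree
      have := (natDegree_X_mul_derivative_le (Q m)).trans (hdeg m)
      omega
    rw [← reflect_succ_eq _ _ hdegG]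
    have hsplit : (2 * X * (1 + X) * derivative (Q m) : Polynomial ℝ)
        = (2 * X * (1 + X)) * derivative (Q m) := by ring
    have hfdeg : (2 * X * (1 + X) : Polynomial ℝ).natDegree ≤ 2 := by compute_degree
    have hgdeg : (derivative (Q m)).natDegree ≤ m :=
      le_trans (natDegree_derivative_le (Q m)) (by have := hdeg m; omega)
    rw [show m + 1 + 1 = 2 + m from by omega, hsplit, reflect_mul _ _ hfdeg hgdeg]
    have hf2 : reflect 2 (2 * X * (1 + X) : Polynomial ℝ) = 2 * X + 2 := by
      have he : (2 * X * (1 + X) : Polynomial ℝ) = C 2 * X ^ 1 + C 2 * X ^ 2 := by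
        simp only [map_ofNat]
        ring
      rw [he, reflect_add, reflect_C_mul_X_pow, reflect_C_mul_X_pow,
        revAt_le (by omega : 1 ≤ 2), revAt_le (le_refl 2)]
      simp only [map_ofNat]
      norm_num
      try ring
    rw [hf2, reflect_derivative' (Q m) m (hdeg m)]
    simp only [C_eq_natCast]
    ring
  -- assemble
  have hbm1 := hb (m + 1)
  rw [hrec m, reflect_sub', hrefl1, hrefl2] at hbm1
  rw [hbm1, hdR, hdQ, ← hab, hQab]
  ring
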